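/- Smoothing Lemma: every connected graph G with at least 3 vertices has a solvable distribution D of minimum size (|D| = π_OPT(G)) such that D places at most two pebbles on every vertex of degree 2 and zero pebbles on every vertex of degree 1. -/

import Mathlib

open SimpleGraph

variable {V : Type*}

/-- Apply a pebbling move along the ordered pair `e`. -/
def applyMove [DecidableEq V] (D : V → ℕ) (e : V × V) : V → ℕ :=
  fun w => if w = e.1 then D w - 2 else if w = e.2 then D w + 1 else D w

/-- A list of ordered pairs is a valid pebbling sequence from `D`. -/
def ValidSeq [DecidableEq V] (G : SimpleGraph V) : (V → ℕ) → List (V × V) → Prop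
  | _, [] => True
  | D, e :: l => G.Adj e.1 e.2 ∧ 2 ≤ D e.1 ∧ ValidSeq G (applyMove D e) l

def applySeq [DecidableEq V] (D : V → ℕ) : List (V × V) → (V → ℕ)
  | [] => D
  | e :: l => applySeq (applyMove D e) l

/-- `r` is `m`-reachable under `D`. -/
def Reaches [DecidableEq V] (G : SimpleGraph V) (D : V → ℕ) (r : V) (m : ℕ) : Prop :=
  ∃ l : List (V × V), ValidSeq G D l ∧ m ≤ applySeq D l r

def Solvable [DecidableEq V] (G : SimpleGraph V) (D : V → ℕ) : Prop :=
  ∀ r : V, Reaches G D r 1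

noncomputable def pebNumTo [Fintype V] [DecidableEq V] (G : SimpleGraph V) (r : V) : ℕ :=
  sInf {k : ℕ | ∀ D : V → ℕ, (∑ v, D v) = k → Reaches G D r 1}

noncomputable def pebNum [Fintype V] [DecidableEq V] (G : SimpleGraph V) : ℕ :=
  sInf {k : ℕ | ∀ D : V → ℕ, (∑ v, D v) = k → Solvable G D}

noncomputable def optPebNum [Fintype V] [DecidableEq V] (G : SimpleGraph V) : ℕ :=
  sInf {k : ℕ | ∃ D : V → ℕ, (∑ v, D v) = k ∧ Solvable G D}

section Basic
variable [DecidableEq V] {G : SimpleGraph V}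

lemma validSeq_append {D : V → ℕ} {l1 l2 : List (V × V)} :
    ValidSeq G D (l1 ++ l2) ↔ ValidSeq G D l1 ∧ ValidSeq G (applySeq D l1) l2 := by
  induction l1 generalizing D with
  | nil => simp [ValidSeq, applySeq]
  | cons e l ih =>
    show (_ ∧ _ ∧ ValidSeq G _ (l ++ l2)) ↔ _
    rw [ih]
    simp [ValidSeq, applySeq, and_assoc]

lemma applySeq_append {D : V → ℕ} {l1 l2 : List (V × V)} :
    applySeq D (l1 ++ l2) = applySeq (applySeq D l1) l2 := by
  induction l1 generalizing D with
  | nil => simp [applySeq]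
  | cons e l ih => simp [applySeq, ih]

end Basic

section Fire
variable [DecidableEq V] {G : SimpleGraph V}

lemma applyMove_slack {D E : V → ℕ} (e : V × V) (w : V) (k : ℕ)
    (h : D w + k ≤ E w) (hv : w = e.1 → k = 0 ∨ 2 ≤ D w) :
    applyMove D e w + k ≤ applyMove E e w := by
  simp only [applyMove]
  split_ifs with h1 h2
  · rcases hv h1 with h' | h' <;> omega
  · omega
  · omega

lemma applyMove_slack2 {D E : V → ℕ} (e : V × V) (w : V)
    (h : D w ≤ E w + 2) (hv : w = e.1 → 2 ≤ E w) :
    applyMove D e w ≤ applyMove E e w + 2 := by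
  simp only [applyMove]
  split_ifs with h1 h2
  · have := hv h1; omega
  · omega
  · omega

lemma applyMove_eq_of_fst {D : V → ℕ} {e : V × V} {w : V} (h : w = e.1) :
    applyMove D e w = D w - 2 := by
  simp only [applyMove, if_pos h]

lemma applyMove_eq_of_snd {D : V → ℕ} {e : V × V} {w : V} (h1 : w ≠ e.1) (h2 : w = e.2) :
    applyMove D e w = D w + 1 := by
  simp only [applyMove, if_neg h1, if_pos h2]

lemma applyMove_eq_of_ne {D : V → ℕ} {e : V × V} {w : V} (h1 : w ≠ e.1) (h2 : w ≠ e.2) :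
    applyMove D e w = D w := by
  simp only [applyMove, if_neg h1, if_neg h2]

/-- Invariant for the degree-2 firing simulation. -/
def FInv (v u1 u2 : V) (D E : V → ℕ) : Prop :=
  (∀ w, w ≠ v → D w ≤ E w) ∧
  (D v ≤ E v ∨ (D v ≤ E v + 2 ∧ D u1 + 1 ≤ E u1 ∧ D u2 + 1 ≤ E u2))

lemma fire_sim {v u1 u2 : V} (hu1v : u1 ≠ v) (hu2v : u2 ≠ v)
    (hadj : ∀ w, G.Adj v w ↔ (w = u1 ∨ w = u2)) :
    ∀ (l : List (V × V)) (D E : V → ℕ), ValidSeq G D l → FInv v u1 u2 D E →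
    ∃ l', ValidSeq G E l' ∧ FInv v u1 u2 (applySeq D l) (applySeq E l') := by
  intro l
  induction l with
  | nil => exact fun D E _ h => ⟨[], trivial, h⟩
  | cons e l ih =>
    intro D E hv hI
    obtain ⟨hadje, h2, hvl⟩ := hv
    obtain ⟨hIa, hIb⟩ := hI
    have hne : e.1 ≠ e.2 := G.ne_of_adj hadje
    by_cases hskip : e.1 = v ∧ E v ≤ 1
    · -- skip the move
      obtain ⟨hev, hEv⟩ := hskip
      have hDv : 2 ≤ D v := hev ▸ h2
      have hb : D v ≤ E v + 2 ∧ D u1 + 1 ≤ E u1 ∧ D u2 + 1 ≤ E u2 := by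
        rcases hIb with hb | hb
        · omega
        · exact hb
      have he2 : e.2 = u1 ∨ e.2 = u2 := (hadj e.2).mp (hev ▸ hadje)
      have hI' : FInv v u1 u2 (applyMove D e) E := by
        constructor
        · intro w hw
          by_cases hw2 : w = e.2
          · rw [applyMove_eq_of_snd (fun hh => hw (hh.trans hev)) hw2]
            rcases he2 with h | h
            · rw [hw2, h]; exact hb.2.1
            · rw [hw2, h]; exact hb.2.2
          · rw [applyMove_eq_of_ne (fun hh => hw (hh.trans hev)) hw2]
            exact hIa w hw
        · left
          rw [applyMove_eq_of_fst (hev.symm : v = e.1)]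
          omega
      obtain ⟨l', hl', hI''⟩ := ih (applyMove D e) E hvl hI'
      exact ⟨l', hl', hI''⟩
    · -- simulate the same move
      have hE2 : 2 ≤ E e.1 := by
        by_cases hev : e.1 = v
        · have : ¬ E v ≤ 1 := fun h => hskip ⟨hev, h⟩
          rw [hev]; omega
        · exact le_trans h2 (hIa e.1 hev)
      have hI' : FInv v u1 u2 (applyMove D e) (applyMove E e) := by
        constructor
        · intro w hw
          have h1 := hIa w hw
          have := applyMove_slack (D := D) (E := E) e w 0 (by omega) (fun _ => Or.inl rfl)
          omega
        · rcases hIb with hb | ⟨hb1, hb2, hb3⟩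
          · left
            have := applyMove_slack (D := D) (E := E) e v 0 (by omega) (fun _ => Or.inl rfl)
            omega
          · right
            have hValid : ∀ w : V, w = e.1 → 2 ≤ D w := fun w hw => hw ▸ h2
            refine ⟨?_, ?_, ?_⟩
            · exact applyMove_slack2 e v hb1 (fun hh => hh ▸ hE2)
            · have := applyMove_slack (D := D) (E := E) e u1 1 hb2
                (fun hh => Or.inr (hValid u1 hh))
              omega
            · have := applyMove_slack (D := D) (E := E) e u2 1 hb3
                (fun hh => Or.inr (hValid u2 hh))
              omega
      obtain ⟨l', hl', hI''⟩ := ih (applyMove D e) (applyMove E e) hvl hI'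
      exact ⟨e :: l', ⟨hadje, hE2, hl'⟩, hI''⟩

end Fire

section FireAt
variable [DecidableEq V] {G : SimpleGraph V}

def fireAt (D : V → ℕ) (v u1 u2 : V) : V → ℕ :=
  fun w => if w = v then D v - 2 else if w = u1 then D u1 + 1 else if w = u2 then D u2 + 1 else D w

lemma fire_solvable {v u1 u2 : V} {D : V → ℕ} (hu12 : u1 ≠ u2) (hu1v : u1 ≠ v) (hu2v : u2 ≠ v)
    (hadj : ∀ w, G.Adj v w ↔ (w = u1 ∨ w = u2)) (hD : Solvable G D) (h3 : 3 ≤ D v) :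
    Solvable G (fireAt D v u1 u2) := by
  intro r
  by_cases hr : r = v
  · refine ⟨[], trivial, ?_⟩
    subst hr
    simp only [applySeq, fireAt, if_pos rfl, ite_true]
    omega
  · obtain ⟨l, hl, hlr⟩ := hD r
    have hI : FInv v u1 u2 D (fireAt D v u1 u2) := by
      constructor
      · intro w hw
        simp only [fireAt]
        split_ifs with h1 h2 h3
        · exact absurd h1 hw
        · subst h2; omega
        · subst h3; omega
        · omega
      · right
        constructor
        · simp only [fireAt, if_pos rfl, ite_true]; omega
        constructor
        · simp only [fireAt, if_neg hu1v, if_pos rfl, ite_true]; exact le_rfl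
        · simp only [fireAt, if_neg hu2v, if_neg hu12.symm, if_pos rfl, ite_true]; exact le_rfl
    obtain ⟨l', hl', hI'⟩ := fire_sim hu1v hu2v hadj l D (fireAt D v u1 u2) hl hI
    exact ⟨l', hl', le_trans hlr (hI'.1 r hr)⟩

end FireAt

section Leaf
variable [DecidableEq V] {G : SimpleGraph V}

/-- Invariant for the leaf simulation. -/
def LInv (v u : V) (D E : V → ℕ) : Prop :=
  (∀ w, w ≠ v → w ≠ u → D w ≤ E w) ∧ D u + D v ≤ E u ∧ D u + 1 ≤ E u

lemma leaf_sim {v u : V} (huv : u ≠ v)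
    (hadj : ∀ w, G.Adj v w ↔ w = u) :
    ∀ (l : List (V × V)) (D E : V → ℕ), ValidSeq G D l → LInv v u D E →
    ∃ l', ValidSeq G E l' ∧ LInv v u (applySeq D l) (applySeq E l') := by
  intro l
  induction l with
  | nil => exact fun D E _ h => ⟨[], trivial, h⟩
  | cons e l ih =>
    intro D E hv hI
    obtain ⟨hadje, h2, hvl⟩ := hv
    obtain ⟨hIa, hIb, hIc⟩ := hI
    have hne : e.1 ≠ e.2 := G.ne_of_adj hadje
    by_cases hskip : e.1 = v ∨ e.2 = v
    · -- the move touches v; skip it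
      have hI' : LInv v u (applyMove D e) E := by
        rcases hskip with hev | hev
        · -- move from v to u
          have he2 : e.2 = u := (hadj e.2).mp (hev ▸ hadje)
          have hDv : 2 ≤ D v := hev ▸ h2
          refine ⟨fun w hw hwu => ?_, ?_, ?_⟩
          · rw [applyMove_eq_of_ne (fun hh => hw (hh.trans hev))
              (fun hh => hwu (hh.trans he2))]
            exact hIa w hw hwu
          · rw [applyMove_eq_of_snd (fun hh => huv (hh.trans hev)) he2.symm,
              applyMove_eq_of_fst (hev.symm : v = e.1)]
            omega
          · rw [applyMove_eq_of_snd (fun hh => huv (hh.trans hev)) he2.symm]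
            omega
        · -- move into v, necessarily from u
          have he1 : e.1 = u := by
            have : G.Adj e.2 e.1 := hadje.symm
            exact (hadj e.1).mp (hev ▸ this)
          have hDu : 2 ≤ D u := he1 ▸ h2
          refine ⟨fun w hw hwu => ?_, ?_, ?_⟩
          · rw [applyMove_eq_of_ne (fun hh => hwu (hh.trans he1))
              (fun hh => hw (hh.trans hev))]
            exact hIa w hw hwu
          · rw [applyMove_eq_of_fst (he1.symm : u = e.1),
              applyMove_eq_of_snd (fun hh => huv ((hh.trans he1).symm)) hev.symm]
            omega
          · rw [applyMove_eq_of_fst (he1.symm : u = e.1)]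
            omega
      obtain ⟨l', hl', hI''⟩ := ih (applyMove D e) E hvl hI'
      exact ⟨l', hl', hI''⟩
    · -- simulate
      push_neg at hskip
      obtain ⟨hev, he2v⟩ := hskip
      have hE2 : 2 ≤ E e.1 := by
        by_cases heu : e.1 = u
        · rw [heu]; have := heu ▸ h2; omega
        · exact le_trans h2 (hIa e.1 hev heu)
      have hI' : LInv v u (applyMove D e) (applyMove E e) := by
        refine ⟨fun w hw hwu => ?_, ?_, ?_⟩
        · have h1 := hIa w hw hwu
          have := applyMove_slack (D := D) (E := E) e w 0 (by omega) (fun _ => Or.inl rfl)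
          omega
        · have := applyMove_slack (D := D) (E := E) e u (D v)
            (by omega) (fun hh => Or.inr (hh ▸ h2))
          have hv2 : applyMove D e v = D v := applyMove_eq_of_ne
            (fun hh => hev hh.symm) (fun hh => he2v hh.symm)
          omega
        · have := applyMove_slack (D := D) (E := E) e u 1 hIc (fun hh => Or.inr (hh ▸ h2))
          omega
      obtain ⟨l', hl', hI''⟩ := ih (applyMove D e) (applyMove E e) hvl hI'
      exact ⟨e :: l', ⟨hadje, hE2, hl'⟩, hI''⟩

end Leaf

section LeafStep
variable [DecidableEq V] {G : SimpleGraph V}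

def leafStep (D : V → ℕ) (v u : V) : V → ℕ :=
  fun w => if w = v then 0 else if w = u then D u + D v else D w

lemma leaf_solvable {v u : V} {D : V → ℕ} (huv : u ≠ v)
    (hadj : ∀ w, G.Adj v w ↔ w = u) (hD : Solvable G D) (h1 : 1 ≤ D v) :
    Solvable G (leafStep D v u) := by
  have hI : LInv v u D (leafStep D v u) := by
    refine ⟨fun w hw hwu => ?_, ?_, ?_⟩
    · simp only [leafStep, if_neg hw, if_neg hwu]; exact le_rfl
    · simp only [leafStep, if_neg huv, if_pos rfl, ite_true]; exact le_rfl
    · simp only [leafStep, if_neg huv, if_pos rfl, ite_true]; omega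
  intro r
  by_cases hr : r = v
  · subst hr
    obtain ⟨l, hl, hlr⟩ := hD u
    obtain ⟨l', hl', hIa', hIb', hIc'⟩ := leaf_sim huv hadj l D (leafStep D r u) hl hI
    refine ⟨l' ++ [(u, r)], ?_, ?_⟩
    · rw [validSeq_append]
      refine ⟨hl', ?_, ?_, trivial⟩
      · exact ((hadj u).mpr rfl).symm
      · show 2 ≤ applySeq (leafStep D r u) l' u
        omega
    · rw [applySeq_append]
      have : applySeq (applySeq (leafStep D r u) l') [(u, r)] r
          = applySeq (leafStep D r u) l' r + 1 := by
        show applyMove _ (u, r) r = _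
        rw [applyMove_eq_of_snd (fun hh => huv hh.symm) rfl]
      omega
  · obtain ⟨l, hl, hlr⟩ := hD r
    obtain ⟨l', hl', hIa', hIb', hIc'⟩ := leaf_sim huv hadj l D (leafStep D v u) hl hI
    by_cases hru : r = u
    · subst hru; exact ⟨l', hl', by omega⟩
    · exact ⟨l', hl', le_trans hlr (hIa' r hr hru)⟩

end LeafStep

section Sums
variable [DecidableEq V] [Fintype V]

lemma sum_fireAt {D : V → ℕ} {v u1 u2 : V} (hu12 : u1 ≠ u2) (hu1v : u1 ≠ v) (hu2v : u2 ≠ v)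
    (h2 : 2 ≤ D v) : (∑ w, fireAt D v u1 u2 w) = ∑ w, D w := by
  have hrw : ∀ w, fireAt D v u1 u2 w =
      (D w + ((if w = u1 then 1 else 0) + (if w = u2 then 1 else 0))) - (if w = v then 2 else 0) := by
    intro w
    simp only [fireAt]
    by_cases h1 : w = v
    · subst h1
      rw [if_pos rfl, if_neg (fun hh : w = u1 => hu1v hh.symm),
        if_neg (fun hh : w = u2 => hu2v hh.symm), if_pos rfl]
      omega
    · rw [if_neg h1, if_neg h1]
      by_cases h2 : w = u1
      · subst h2
        rw [if_pos rfl, if_pos rfl, if_neg hu12]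
        omega
      · rw [if_neg h2, if_neg h2]
        by_cases h3 : w = u2
        · subst h3
          rw [if_pos rfl, if_pos rfl]
          omega
        · rw [if_neg h3, if_neg h3]
          omega
  calc (∑ w, fireAt D v u1 u2 w)
      = ∑ w, ((D w + ((if w = u1 then 1 else 0) + (if w = u2 then 1 else 0))) - (if w = v then 2 else 0)) :=
        Finset.sum_congr rfl (fun w _ => hrw w)
    _ = (∑ w, (D w + ((if w = u1 then 1 else 0) + (if w = u2 then 1 else 0)))) - ∑ w, (if w = v then 2 else 0) := by
        refine Finset.sum_tsub_distrib _ (fun w _ => ?_)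
        by_cases h1 : w = v
        · subst h1; rw [if_pos rfl]; omega
        · rw [if_neg h1]; omega
    _ = ∑ w, D w := by
        rw [Finset.sum_add_distrib, Finset.sum_add_distrib]
        simp [Finset.sum_ite_eq']

lemma sum_leafStep {D : V → ℕ} {v u : V} (huv : u ≠ v) :
    (∑ w, leafStep D v u w) = ∑ w, D w := by
  have hrw : ∀ w, leafStep D v u w =
      (D w + (if w = u then D v else 0)) - (if w = v then D v else 0) := by
    intro w
    simp only [leafStep]
    by_cases h1 : w = v
    · subst h1
      rw [if_pos rfl, if_neg (fun hh : w = u => huv hh.symm), if_pos rfl]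
      omega
    · rw [if_neg h1, if_neg h1]
      by_cases h2 : w = u
      · subst h2; rw [if_pos rfl, if_pos rfl]; omega
      · rw [if_neg h2, if_neg h2]; omega
  calc (∑ w, leafStep D v u w)
      = ∑ w, ((D w + (if w = u then D v else 0)) - (if w = v then D v else 0)) :=
        Finset.sum_congr rfl (fun w _ => hrw w)
    _ = (∑ w, (D w + (if w = u then D v else 0))) - ∑ w, (if w = v then D v else 0) := by
        refine Finset.sum_tsub_distrib _ (fun w _ => ?_)
        by_cases h1 : w = v
        · subst h1; rw [if_pos rfl]; omega
        · rw [if_neg h1]; omega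
    _ = ∑ w, D w := by
        rw [Finset.sum_add_distrib]
        simp [Finset.sum_ite_eq']

end Sums

section Degrees
variable [DecidableEq V] {G : SimpleGraph V} [DecidableRel G.Adj]

lemma degree_one_struct [Fintype V] {v : V} (h : G.degree v = 1) :
    ∃ u, u ≠ v ∧ ∀ w, G.Adj v w ↔ w = u := by
  rw [← SimpleGraph.card_neighborFinset_eq_degree, Finset.card_eq_one] at h
  obtain ⟨u, hu⟩ := h
  have hmem : ∀ w, G.Adj v w ↔ w = u := by
    intro w
    rw [← SimpleGraph.mem_neighborFinset, hu, Finset.mem_singleton]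
  refine ⟨u, fun hh => G.loopless.irrefl v (hh ▸ (hmem u).mpr rfl), hmem⟩

lemma degree_two_struct [Fintype V] {v : V} (h : G.degree v = 2) :
    ∃ u1 u2, u1 ≠ u2 ∧ u1 ≠ v ∧ u2 ≠ v ∧ ∀ w, G.Adj v w ↔ (w = u1 ∨ w = u2) := by
  rw [← SimpleGraph.card_neighborFinset_eq_degree, Finset.card_eq_two] at h
  obtain ⟨u1, u2, h12, hu⟩ := h
  have hmem : ∀ w, G.Adj v w ↔ (w = u1 ∨ w = u2) := by
    intro w
    rw [← SimpleGraph.mem_neighborFinset, hu, Finset.mem_insert, Finset.mem_singleton]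
  refine ⟨u1, u2, h12, fun hh => G.loopless.irrefl v (hh ▸ (hmem u1).mpr (Or.inl rfl)),
    fun hh => G.loopless.irrefl v (hh ▸ (hmem u2).mpr (Or.inr rfl)), hmem⟩

end Degrees

section Structure
variable {G : SimpleGraph V}

open SimpleGraph.Walk

lemma cross_lemma {S : Set V} :
    ∀ {x a : V} (_ : G.Walk x a), x ∉ S → a ∈ S → ∃ y z, G.Adj y z ∧ y ∉ S ∧ z ∈ S := by
  intro x a Q
  induction Q with
  | nil => intro hx ha; exact absurd ha hx
  | cons h q ih =>
    intro hx ha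
    rename_i xx yy zz
    by_cases hy : yy ∈ S
    · exact ⟨xx, yy, h, hx, hy⟩
    · exact ih hy ha

lemma path_interior_two_nbrs :
    ∀ {a b : V} (p : G.Walk a b), p.IsPath → ∀ {c}, c ∈ p.support → c ≠ a → c ≠ b →
      ∃ x y, x ≠ y ∧ G.Adj c x ∧ G.Adj c y ∧ x ∈ p.support ∧ y ∈ p.support := by
  intro a b p
  induction p with
  | nil =>
    intro _ c hc hca _
    rw [support_nil, List.mem_singleton] at hc
    exact absurd hc hca
  | @cons u w b' hadj q ih =>
    intro hp c hc hca hcb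
    rw [support_cons, List.mem_cons] at hc
    rcases hc with hc | hc
    · exact absurd hc hca
    · by_cases hcw : c = w
      · subst hcw
        cases q with
        | nil => exact absurd rfl hcb
        | @cons _ z _ hadj2 r =>
          refine ⟨u, z, ?_, hadj.symm, hadj2, ?_, ?_⟩
          · intro huz
            have hnd := hp.support_nodup
            rw [support_cons, List.nodup_cons] at hnd
            refine hnd.1 (by
              rw [huz, support_cons, List.mem_cons]
              exact Or.inr r.start_mem_support)
          · rw [support_cons]; exact List.mem_cons_self
          · rw [support_cons, support_cons, List.mem_cons, List.mem_cons]
            exact Or.inr (Or.inr r.start_mem_support)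
      · obtain ⟨x, y, hxy, hx, hy, hxs, hys⟩ := ih hp.of_cons hc hcw hcb
        refine ⟨x, y, hxy, hx, hy, ?_, ?_⟩
        · rw [support_cons]; exact List.mem_cons_of_mem _ hxs
        · rw [support_cons]; exact List.mem_cons_of_mem _ hys

lemma path_endpoint_nbr {a b : V} (p : G.Walk a b) (hab : a ≠ b) :
    ∃ y, y ∈ p.support ∧ G.Adj a y := by
  cases p with
  | nil => exact absurd rfl hab
  | cons h q =>
    rename_i w
    exact ⟨w, by rw [support_cons]; exact List.mem_cons_of_mem _ q.start_mem_support, h⟩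

end Structure

section LeavesLeTwo
variable [Fintype V] [DecidableEq V] {G : SimpleGraph V} [DecidableRel G.Adj]

open SimpleGraph.Walk

lemma degree_ge_of_three_nbrs {z x y w : V} (hx : G.Adj z x) (hy : G.Adj z y) (hw : G.Adj z w)
    (hxy : x ≠ y) (hxw : x ≠ w) (hyw : y ≠ w) : 3 ≤ G.degree z := by
  rw [← SimpleGraph.card_neighborFinset_eq_degree]
  have hsub : ({x, y, w} : Finset V) ⊆ G.neighborFinset z := by
    intro t ht
    simp only [Finset.mem_insert, Finset.mem_singleton] at ht
    rcases ht with h | h | h <;> subst h <;> rw [SimpleGraph.mem_neighborFinset] <;> assumption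
  calc 3 = ({x, y, w} : Finset V).card := by
        rw [Finset.card_insert_of_notMem (by simp [hxy, hxw]),
          Finset.card_insert_of_notMem (by simp [hyw]), Finset.card_singleton]
    _ ≤ _ := Finset.card_le_card hsub

lemma leaves_le_two (hG : G.Connected) (hdeg : ∀ v, G.degree v = 1 ∨ G.degree v = 2) :
    (Finset.univ.filter (fun v => G.degree v = 1)).card ≤ 2 := by
  by_contra hcon
  rw [not_le] at hcon
  obtain ⟨a, b, c, ha, hb, hc, hab, hac, hbc⟩ := Finset.two_lt_card_iff.mp hcon
  rw [Finset.mem_filter] at ha hb hc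
  have hda := ha.2; have hdb := hb.2; have hdc := hc.2
  obtain ⟨pw⟩ := hG.preconnected a b
  let p := pw.toPath
  have hp : (p : G.Walk a b).IsPath := p.2
  -- every vertex is on the path
  have hall : ∀ x, x ∈ (p : G.Walk a b).support := by
    intro x
    by_contra hx
    obtain ⟨qw⟩ := hG.preconnected x a
    obtain ⟨y, z, hyz, hyS, hzS⟩ := cross_lemma (S := {w | w ∈ (p : G.Walk a b).support}) qw hx
      ((p : G.Walk a b).start_mem_support)
    by_cases hza : z = a
    · obtain ⟨u, hu, hadj⟩ := degree_one_struct hda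
      obtain ⟨y', hy', hady'⟩ := path_endpoint_nbr (p : G.Walk a b) hab
      have h1 : y' = u := (hadj y').mp hady'
      have h2 : y = u := (hadj y).mp (hza ▸ hyz.symm)
      exact hyS (h2 ▸ h1 ▸ hy')
    · by_cases hzb : z = b
      · obtain ⟨u, hu, hadj⟩ := degree_one_struct hdb
        obtain ⟨y', hy', hady'⟩ := path_endpoint_nbr ((p : G.Walk a b).reverse) (Ne.symm hab)
        rw [support_reverse, List.mem_reverse] at hy'
        have h1 : y' = u := (hadj y').mp hady'
        have h2 : y = u := (hadj y).mp (hzb ▸ hyz.symm)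
        exact hyS (h2 ▸ h1 ▸ hy')
      · obtain ⟨x1, x2, hx12, hzx1, hzx2, hx1s, hx2s⟩ :=
          path_interior_two_nbrs (p : G.Walk a b) hp hzS hza hzb
        have h3 := degree_ge_of_three_nbrs hzx1 hzx2 hyz.symm hx12
          (fun hh => hyS (hh ▸ hx1s)) (fun hh => hyS (hh ▸ hx2s))
        rcases hdeg z with h | h <;> omega
  -- now c is interior on the path
  obtain ⟨x1, x2, hx12, hcx1, hcx2, _, _⟩ :=
    path_interior_two_nbrs (p : G.Walk a b) hp (hall c) hac.symm hbc.symm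
  obtain ⟨u, hu, hadj⟩ := degree_one_struct hdc
  have h1 : x1 = u := (hadj x1).mp hcx1
  have h2 : x2 = u := (hadj x2).mp hcx2
  exact hx12 (h1.trans h2.symm)

end LeavesLeTwo

section TwoNbrs
variable [Fintype V] [DecidableEq V] {G : SimpleGraph V}

open SimpleGraph.Walk

lemma exists_two_nbrs (hG : G.Connected) (hn : 3 ≤ Fintype.card V) :
    ∃ v x y, x ≠ y ∧ G.Adj v x ∧ G.Adj v y := by
  have h3 : 2 < (Finset.univ : Finset V).card := by
    rwa [Finset.card_univ]
  obtain ⟨a, b, c, _, _, _, hab, hac, hbc⟩ := Finset.two_lt_card_iff.mp h3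
  obtain ⟨pw⟩ := hG.preconnected a b
  let p := pw.toPath
  have hp : (p : G.Walk a b).IsPath := p.2
  by_cases hc : c ∈ (p : G.Walk a b).support
  · obtain ⟨x, y, hxy, h1, h2, _, _⟩ := path_interior_two_nbrs (p : G.Walk a b) hp hc hac.symm hbc.symm
    exact ⟨c, x, y, hxy, h1, h2⟩
  · obtain ⟨qw⟩ := hG.preconnected c a
    obtain ⟨y, z, hyz, hyS, hzS⟩ := cross_lemma (S := {w | w ∈ (p : G.Walk a b).support}) qw hc
      ((p : G.Walk a b).start_mem_support)
    by_cases hza : z = a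
    · obtain ⟨y', hy', hady'⟩ := path_endpoint_nbr (p : G.Walk a b) hab
      refine ⟨a, y, y', fun hh => hyS (hh ▸ hy'), hza ▸ hyz.symm, hady'⟩
    · by_cases hzb : z = b
      · obtain ⟨y', hy', hady'⟩ := path_endpoint_nbr ((p : G.Walk a b).reverse) (Ne.symm hab)
        rw [support_reverse, List.mem_reverse] at hy'
        refine ⟨b, y, y', fun hh => hyS (hh ▸ hy'), hzb ▸ hyz.symm, hady'⟩
      · obtain ⟨x1, x2, hx12, h1, h2, _, _⟩ := path_interior_two_nbrs (p : G.Walk a b) hp hzS hza hzb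
        exact ⟨z, x1, x2, hx12, h1, h2⟩

end TwoNbrs

section Cheap
variable [Fintype V] [DecidableEq V] {G : SimpleGraph V}

lemma cheap_distribution {v x y : V} (hxy : x ≠ y) (hvx : G.Adj v x) (hvy : G.Adj v y) :
    ∃ D : V → ℕ, (∑ w, D w) = Fintype.card V - 1 ∧ Solvable G D := by
  have hvnx : v ≠ x := G.ne_of_adj hvx
  have hvny : v ≠ y := G.ne_of_adj hvy
  refine ⟨fun w => if w = x ∨ w = y then 0 else if w = v then 2 else 1, ?_, ?_⟩
  · have hrw : ∀ w : V, (if w = x ∨ w = y then 0 else if w = v then 2 else 1)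
        = (1 + (if w = v then 1 else 0)) - ((if w = x then 1 else 0) + (if w = y then 1 else 0)) := by
      intro w
      by_cases h1 : w = x
      · subst h1
        rw [if_pos (Or.inl rfl), if_pos rfl, if_neg (fun hh : w = y => hxy hh),
          if_neg (fun hh : w = v => hvnx hh.symm)]
      · by_cases h2 : w = y
        · subst h2
          rw [if_pos (Or.inr rfl), if_pos rfl, if_neg h1, if_neg (fun hh : w = v => hvny hh.symm)]
        · rw [if_neg (by tauto : ¬(w = x ∨ w = y)), if_neg h1, if_neg h2]
          by_cases h3 : w = v
          · rw [if_pos h3, if_pos h3]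
          · rw [if_neg h3, if_neg h3]
    calc (∑ w, if w = x ∨ w = y then 0 else if w = v then 2 else 1)
        = ∑ w : V, ((1 + (if w = v then 1 else 0)) - ((if w = x then 1 else 0) + (if w = y then 1 else 0))) :=
          Finset.sum_congr rfl (fun w _ => hrw w)
      _ = (∑ w : V, (1 + (if w = v then 1 else 0))) - ∑ w : V, ((if w = x then 1 else 0) + (if w = y then 1 else 0)) := by
          refine Finset.sum_tsub_distrib _ (fun w _ => ?_)
          by_cases h1 : w = x
          · subst h1
            rw [if_pos rfl, if_neg (fun hh : w = y => hxy hh)]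
            omega
          · by_cases h2 : w = y
            · subst h2; rw [if_neg h1, if_pos rfl]; omega
            · rw [if_neg h1, if_neg h2]; omega
      _ = Fintype.card V - 1 := by
          rw [Finset.sum_add_distrib, Finset.sum_add_distrib]
          simp [Finset.sum_ite_eq', Finset.card_univ]
  · intro r
    by_cases hr : r = x
    · subst hr
      refine ⟨[(v, r)], ⟨hvx, ?_, trivial⟩, ?_⟩
      · show 2 ≤ (if v = r ∨ v = y then 0 else if v = v then 2 else 1 : ℕ)
        rw [if_neg (by tauto : ¬(v = r ∨ v = y)), if_pos rfl]
      · simp only [applySeq]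
        rw [applyMove_eq_of_snd (by exact fun hh => hvnx hh.symm) rfl]
        omega
    · by_cases hr2 : r = y
      · subst hr2
        refine ⟨[(v, r)], ⟨hvy, ?_, trivial⟩, ?_⟩
        · show 2 ≤ (if v = x ∨ v = r then 0 else if v = v then 2 else 1 : ℕ)
          rw [if_neg (by tauto : ¬(v = x ∨ v = r)), if_pos rfl]
        · simp only [applySeq]
          rw [applyMove_eq_of_snd (by exact fun hh => hvny hh.symm) rfl]
          omega
      · refine ⟨[], trivial, ?_⟩
        show 1 ≤ (if r = x ∨ r = y then 0 else if r = v then 2 else 1 : ℕ)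
        rw [if_neg (by tauto : ¬(r = x ∨ r = y))]
        by_cases h3 : r = v
        · rw [if_pos h3]; omega
        · rw [if_neg h3]

end Cheap

section Trans
variable [Fintype V] [DecidableEq V] (G : SimpleGraph V) [DecidableRel G.Adj]

/-- One smoothing step from `D` to `D'` acting at vertex `v`. -/
def TransStep (D D' : V → ℕ) (v : V) : Prop :=
  (G.degree v = 1 ∧ 1 ≤ D v ∧ ∃ u, (∀ w, G.Adj v w ↔ w = u) ∧ D' = leafStep D v u) ∨
  (G.degree v = 2 ∧ 3 ≤ D v ∧ ∃ u1 u2, u1 ≠ u2 ∧ u1 ≠ v ∧ u2 ≠ v ∧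
    (∀ w, G.Adj v w ↔ (w = u1 ∨ w = u2)) ∧ D' = fireAt D v u1 u2)

variable {G}

lemma TransStep.mono {D D' : V → ℕ} {v : V} (h : TransStep G D D' v) {w : V} (hw : w ≠ v) :
    D w ≤ D' w := by
  rcases h with ⟨_, _, u, _, hD'⟩ | ⟨_, _, u1, u2, _, _, _, _, hD'⟩
  · subst hD'
    simp only [leafStep, if_neg hw]
    split_ifs with h1
    · subst h1; omega
    · exact le_rfl
  · subst hD'
    simp only [fireAt, if_neg hw]
    split_ifs with h1 h2
    · subst h1; omega
    · subst h2; omega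
    · exact le_rfl

lemma TransStep.strict {D D' : V → ℕ} {v : V} (h : TransStep G D D' v) {w : V}
    (hadj : G.Adj v w) : D w < D' w := by
  have hwv : w ≠ v := fun hh => G.loopless.irrefl v (hh ▸ hadj)
  rcases h with ⟨_, hDv, u, hspec, hD'⟩ | ⟨_, _, u1, u2, _, _, _, hspec, hD'⟩
  · subst hD'
    have hwu : w = u := (hspec w).mp hadj
    subst hwu
    simp only [leafStep, if_neg hwv, if_pos rfl, ite_true]
    omega
  · subst hD'
    simp only [fireAt, if_neg hwv]
    rcases (hspec w).mp hadj with h1 | h1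
    · subst h1; rw [if_pos rfl]; omega
    · subst h1
      by_cases h2 : w = u1
      · subst h2; rw [if_pos rfl]; omega
      · rw [if_neg h2, if_pos rfl]; omega

lemma TransStep.keep {D D' : V → ℕ} {v : V} (h : TransStep G D D' v)
    (hdeg : G.degree v = 2) : D' v + 2 = D v ∧ 3 ≤ D v := by
  rcases h with ⟨hd, _, _⟩ | ⟨_, h3, u1, u2, _, h1v, h2v, _, hD'⟩
  · omega
  · subst hD'
    simp only [fireAt, if_pos rfl, ite_true]
    omega

lemma TransStep.deg {D D' : V → ℕ} {v : V} (h : TransStep G D D' v) :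
    G.degree v = 1 ∨ G.degree v = 2 := by
  rcases h with ⟨hd, _⟩ | ⟨hd, _⟩
  · exact Or.inl hd
  · exact Or.inr hd

lemma walk_closed {A : Set V} (hcl : ∀ v ∈ A, ∀ w, G.Adj v w → w ∈ A) :
    ∀ {x y : V}, G.Walk x y → x ∈ A → y ∈ A := by
  intro x y pw
  induction pw with
  | nil => exact id
  | cons h q ih => intro hx; exact ih (hcl _ hx _ h)

end Trans

theorem smoothing_lemma [Fintype V] [DecidableEq V] (G : SimpleGraph V)
    [DecidableRel G.Adj] (hG : G.Connected) (hn : 3 ≤ Fintype.card V) :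
    ∃ D : V → ℕ, Solvable G D ∧ (∑ v, D v) = optPebNum G ∧
      (∀ v : V, G.degree v = 2 → D v ≤ 2) ∧
      (∀ v : V, G.degree v = 1 → D v = 0) := by
  classical
  by_contra hcon
  set s := optPebNum G with hsdef
  have hone : Solvable G (fun _ => (1:ℕ)) := fun r => ⟨[], trivial, le_rfl⟩
  have hmem : ∃ D : V → ℕ, (∑ v, D v) = s ∧ Solvable G D := by
    have : ({k : ℕ | ∃ D : V → ℕ, (∑ v, D v) = k ∧ Solvable G D}).Nonempty :=
      ⟨∑ _v : V, (1:ℕ), ⟨fun _ => 1, rfl, hone⟩⟩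
    have h := Nat.sInf_mem this
    simp only [hsdef, optPebNum]
    exact h
  obtain ⟨D₀, hD₀sum, hD₀sol⟩ := hmem
  obtain ⟨v₀, x₀, y₀, hxy₀, hvx₀, hvy₀⟩ := exists_two_nbrs hG hn
  obtain ⟨Dc, hDcsum, hDcsol⟩ := cheap_distribution hxy₀ hvx₀ hvy₀
  have hsle : s ≤ Fintype.card V - 1 := by
    simp only [hsdef, optPebNum]
    exact Nat.sInf_le ⟨Dc, hDcsum, hDcsol⟩
  -- every distribution in the class has a bad vertex
  have hbad : ∀ D : V → ℕ, Solvable G D → (∑ v, D v) = s →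
      ∃ v, (G.degree v = 1 ∧ 1 ≤ D v) ∨ (G.degree v = 2 ∧ 3 ≤ D v) := by
    intro D h1 h2
    by_contra hb
    have hb' : ∀ v, ¬((G.degree v = 1 ∧ 1 ≤ D v) ∨ (G.degree v = 2 ∧ 3 ≤ D v)) :=
      fun v h => hb ⟨v, h⟩
    refine hcon ⟨D, h1, h2, fun v hv => ?_, fun v hv => ?_⟩
    · by_contra h3
      exact hb' v (Or.inr ⟨hv, by omega⟩)
    · by_contra h3
      exact hb' v (Or.inl ⟨hv, by omega⟩)
  -- a single smoothing step
  have hstep : ∀ D : V → ℕ, (Solvable G D ∧ (∑ v, D v) = s) →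
      ∃ P : (V → ℕ) × V, Solvable G P.1 ∧ (∑ w, P.1 w) = s ∧ TransStep G D P.1 P.2 := by
    rintro D ⟨h1, h2⟩
    obtain ⟨v, hv⟩ := hbad D h1 h2
    rcases hv with ⟨hdv, hDv⟩ | ⟨hdv, hDv⟩
    · obtain ⟨u, huv, hadj⟩ := degree_one_struct hdv
      exact ⟨(leafStep D v u, v), leaf_solvable huv hadj h1 hDv,
        (sum_leafStep huv).trans h2, Or.inl ⟨hdv, hDv, u, hadj, rfl⟩⟩
    · obtain ⟨u1, u2, h12, h1v, h2v, hadj⟩ := degree_two_struct hdv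
      exact ⟨(fireAt D v u1 u2, v), fire_solvable h12 h1v h2v hadj h1 hDv,
        (sum_fireAt h12 h1v h2v (by omega)).trans h2,
        Or.inr ⟨hdv, hDv, u1, u2, h12, h1v, h2v, hadj, rfl⟩⟩
  obtain ⟨next, act, hna⟩ : ∃ (next : (V → ℕ) → (V → ℕ)) (act : (V → ℕ) → V),
      ∀ D, (Solvable G D ∧ (∑ v, D v) = s) →
        Solvable G (next D) ∧ (∑ w, next D w) = s ∧ TransStep G D (next D) (act D) := by
    refine ⟨fun D => if h : Solvable G D ∧ (∑ v, D v) = s then (hstep D h).choose.1 else D,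
      fun D => if h : Solvable G D ∧ (∑ v, D v) = s then (hstep D h).choose.2 else v₀, ?_⟩
    intro D h
    dsimp only
    rw [dif_pos h, dif_pos h]
    exact (hstep D h).choose_spec
  set g : ℕ → V → ℕ := fun k => next^[k] D₀ with hgdef
  have hgsucc : ∀ k, g (k + 1) = next (g k) := fun k => Function.iterate_succ_apply' next k D₀
  have hginv : ∀ k, Solvable G (g k) ∧ (∑ v, g k v) = s := by
    intro k
    induction k with
    | zero => exact ⟨hD₀sol, hD₀sum⟩
    | succ k ih =>
      rw [hgsucc k]
      exact ⟨(hna (g k) ih).1, (hna (g k) ih).2.1⟩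
  have hTrans : ∀ k, TransStep G (g k) (g (k + 1)) (act (g k)) := by
    intro k
    rw [hgsucc k]
    exact (hna (g k) (hginv k)).2.2
  -- pigeonhole along the trajectory
  have hbound : ∀ k v, g k v ≤ s := by
    intro k v
    calc g k v ≤ ∑ w, g k w :=
          Finset.single_le_sum (fun w _ => Nat.zero_le _) (Finset.mem_univ v)
      _ = s := (hginv k).2
  obtain ⟨i, j, hij, hgij⟩ : ∃ i j, i < j ∧ g i = g j := by
    obtain ⟨i, j, hne, heq⟩ := Finite.exists_ne_map_eq_of_infinite
      (fun k => (fun v => (⟨g k v, Nat.lt_succ_of_le (hbound k v)⟩ : Fin (s + 1))))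
    have heq' : g i = g j := by
      funext v
      exact congrArg Fin.val (congrFun heq v)
    rcases Nat.lt_or_ge i j with h | h
    · exact ⟨i, j, h, heq'⟩
    · exact ⟨j, i, by omega, heq'.symm⟩
  have hper : ∀ t, g (t + j) = g (t + i) := by
    intro t
    show next^[t + j] D₀ = next^[t + i] D₀
    rw [Function.iterate_add_apply, Function.iterate_add_apply]
    exact congrArg _ hgij.symm
  -- monotonicity away from the acting vertex
  have hchain : ∀ (w : V) (a b : ℕ), a ≤ b → (∀ t, a ≤ t → t < b → act (g t) ≠ w) →
      g a w ≤ g b w := by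
    intro w a b hab
    induction b, hab using Nat.le_induction with
    | base => intro _; exact le_rfl
    | succ b hb ih =>
      intro hno
      refine le_trans (ih (fun t h1 h2 => hno t h1 (by omega))) ?_
      exact (hTrans b).mono (fun hh => hno b hb (by omega) hh.symm)
  -- the set of acting vertices in one period
  set A : Set V := {v | ∃ t, i ≤ t ∧ t < j ∧ act (g t) = v} with hAdef
  have hAcl : ∀ v ∈ A, ∀ w, G.Adj v w → w ∈ A := by
    rintro v ⟨t₀, ht0i, ht0j, hactv⟩ w hadj
    by_contra hw
    have hno : ∀ t, i ≤ t → t < j → act (g t) ≠ w := fun t h1 h2 hh => hw ⟨t, h1, h2, hh⟩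
    have h1 : g i w ≤ g t₀ w := hchain w i t₀ ht0i (fun t a b => hno t a (by omega))
    have h2 : g t₀ w < g (t₀ + 1) w := (hTrans t₀).strict (hactv ▸ hadj)
    have h3 : g (t₀ + 1) w ≤ g j w := hchain w (t₀ + 1) j (by omega) (fun t a b => hno t (by omega) b)
    have h4 : g j w = g i w := congrFun hgij.symm w
    omega
  have hAuniv : ∀ w, w ∈ A := by
    have ha0 : act (g i) ∈ A := ⟨i, le_rfl, by omega, rfl⟩
    intro w
    obtain ⟨pw⟩ := hG.preconnected (act (g i)) w
    exact walk_closed hAcl pw ha0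
  have hdeg12 : ∀ v, G.degree v = 1 ∨ G.degree v = 2 := by
    intro v
    obtain ⟨t, _, _, hactv⟩ := hAuniv v
    have := (hTrans t).deg
    rwa [hactv] at this
  -- counting vertices of degree two
  set K : Finset V := Finset.univ.filter (fun v => G.degree v = 2) with hKdef
  have hLle := leaves_le_two hG hdeg12
  have hKL : K.card + (Finset.univ.filter (fun v => G.degree v = 1)).card = Fintype.card V := by
    have hL : (Finset.univ.filter (fun v => G.degree v = 1)) =
        (Finset.univ.filter (fun v => ¬ G.degree v = 2)) := by
      apply Finset.filter_congr
      intro v _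
      have := hdeg12 v
      constructor
      · intro h; omega
      · intro h; omega
    rw [hL, hKdef]
    rw [Finset.card_filter_add_card_filter_not]
    exact Finset.card_univ
  -- a fired degree-2 vertex keeps a pebble afterwards
  have hkeep : ∀ w, G.degree w = 2 → ∀ t, act (g t) = w → ∀ b, t < b → 1 ≤ g b w := by
    intro w hw t hact b htb
    have hstep1 : 1 ≤ g (t + 1) w := by
      have := (hTrans t).keep (hact.symm ▸ hw)
      rw [hact] at this
      omega
    have : ∀ b, t + 1 ≤ b → 1 ≤ g b w := by
      intro b hb
      induction b, hb using Nat.le_induction with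
      | base => exact hstep1
      | succ b hb ih =>
        by_cases hac : act (g b) = w
        · have := (hTrans b).keep (hac.symm ▸ hw)
          rw [hac] at this
          omega
        · exact le_trans ih ((hTrans b).mono (fun hh => hac hh.symm))
    exact this b (by omega)
  -- final counting contradiction
  have hKcard : Fintype.card V ≤ K.card + 2 := by omega
  obtain ⟨w₁, hw₁K⟩ := Finset.card_pos.mp (show 0 < K.card by omega)
  have hdw₁ : G.degree w₁ = 2 := (Finset.mem_filter.mp hw₁K).2
  obtain ⟨t₁, ht₁i, ht₁j, hact₁⟩ := hAuniv w₁
  have htstar : g (t₁ - i + j) = g t₁ := by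
    have h := hper (t₁ - i)
    rw [show t₁ - i + i = t₁ by omega] at h
    exact h
  have hv3 : 3 ≤ g (t₁ - i + j) w₁ := by
    have := (hTrans t₁).keep (hact₁.symm ▸ hdw₁)
    rw [hact₁] at this
    rw [htstar]
    omega
  have hothers : ∀ w ∈ K, 1 ≤ g (t₁ - i + j) w ∨ w = w₁ := by
    intro w hwK
    by_cases hww : w = w₁
    · exact Or.inr hww
    · obtain ⟨tw, htwi, htwj, hactw⟩ := hAuniv w
      exact Or.inl (hkeep w (Finset.mem_filter.mp hwK).2 tw hactw _ (by omega))
  have hsumK : K.card + 2 ≤ ∑ w ∈ K, g (t₁ - i + j) w := by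
    have hpt : ∀ w ∈ K, (1 + if w = w₁ then 2 else 0) ≤ g (t₁ - i + j) w := by
      intro w hwK
      rcases hothers w hwK with h | h
      · by_cases hww : w = w₁
        · rw [if_pos hww, hww]; omega
        · rw [if_neg hww]; omega
      · rw [if_pos h, h]; omega
    calc K.card + 2 = ∑ w ∈ K, (1 + if w = w₁ then 2 else 0) := by
          rw [Finset.sum_add_distrib, Finset.sum_const, Finset.sum_ite_eq' K w₁ (fun _ => 2),
            if_pos hw₁K]
          simp
      _ ≤ ∑ w ∈ K, g (t₁ - i + j) w := Finset.sum_le_sum hpt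
  have hsumfull : (∑ w ∈ K, g (t₁ - i + j) w) ≤ s := by
    rw [← (hginv (t₁ - i + j)).2]
    exact Finset.sum_le_sum_of_subset (Finset.subset_univ K)
  have hfinal : K.card + 2 ≤ s := le_trans hsumK hsumfull
  omega
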